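/- arXiv:2602.23830 — 5 statements merged into one kernel-verified Lean document; each statement's English description precedes it below -/
import Mathlib

section
/- Suppose x* is a local minimizer of (MPVC) at which the Guignard constraint qualification holds, i.e. T(M, x*)⁻ = L(x*)⁻, where M is the feasible set and L(x*) is the linearized cone at x*. Then there exist multipliers y* ∈ ℝᵐ and η_H, η_G ∈ ℝˡ such that −∇f(x*) − Σ_{j=1}^m y*_j ∇g_j(x*) − Σ_{i=1}^l (η_H)_i ∇H_i(x*) − Σ_{i=1}^l (η_G)_i ∇G_i(x*) ∈ T(C, x*)⁻, where (η_H)_i = 0 for i ∈ I₊(x*), (η_H)_i ≤ 0 for i ∈ I₀₀(x*) ∪ I₀₊(x*), (η_H)_i is unrestricted for i ∈ I₀₋(x*), (η_G)_i = 0 for i ∈ I₀(x*) ∪ I₊₊(x*), and (η_G)_i ≤ 0 for i ∈ I₊₀(x*). -/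
noncomputable section

open Filter Topology

/-- The (Bouligand) tangent cone of `S` at `x`: directions `d` for which there are
sequences `xs k ∈ S`, `xs k → x`, and `lam k ≥ 0` with `lam k • (xs k - x) → d`. -/
def tcone {V : Type*} [NormedAddCommGroup V] [NormedSpace ℝ V] (S : Set V) (x : V) :
    Set V :=
  {d | ∃ (xs : ℕ → V) (lam : ℕ → ℝ), (∀ k, xs k ∈ S) ∧ (∀ k, 0 ≤ lam k) ∧
    Tendsto xs atTop (𝓝 x) ∧ Tendsto (fun k => lam k • (xs k - x)) atTop (𝓝 d)}

/-- The polar cone `K⁻ = {d | ⟨d, v⟩ ≤ 0 for all v ∈ K}`. -/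
def polarCone {V : Type*} [NormedAddCommGroup V] [InnerProductSpace ℝ V] (K : Set V) :
    Set V :=
  {d | ∀ v ∈ K, inner ℝ d v ≤ (0 : ℝ)}

section FarkasAux

variable {V : Type*} [NormedAddCommGroup V] [InnerProductSpace ℝ V] [FiniteDimensional ℝ V]

/-- Carathéodory-type lemma for cones: every nonnegative combination of a finite family
is a nonnegative combination supported on a linearly independent subfamily. -/
lemma caratheodory_cone {ι : Type*} [Fintype ι] (v : ι → V) (t : Finset ι) :
    ∀ (lam : ι → ℝ), (∀ i, 0 ≤ lam i) → (∀ i ∉ t, lam i = 0) →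
    ∃ (s : Finset ι) (mu : ι → ℝ), LinearIndependent ℝ (fun i : s => v i) ∧
      (∀ i, 0 ≤ mu i) ∧ (∀ i ∉ s, mu i = 0) ∧ ∑ i, mu i • v i = ∑ i, lam i • v i := by
  classical
  induction t using Finset.strongInduction with
  | _ t ih =>
    intro lam hlam hsupp
    by_cases hind : LinearIndependent ℝ (fun i : t => v i)
    · exact ⟨t, lam, hind, hlam, hsupp, rfl⟩
    obtain ⟨g, hg0, i₁, hgi₁⟩ := Fintype.not_linearIndependent_iff.mp hind
    -- WLOG some coefficient is positive
    obtain ⟨g, hg0, i₁, hgi₁⟩ : ∃ g : t → ℝ, (∑ i : t, g i • v ↑i = 0) ∧ ∃ i₁ : t, 0 < g i₁ := by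
      by_cases hsgn : 0 < g i₁
      · exact ⟨g, hg0, i₁, hsgn⟩
      · have hneg : g i₁ < 0 := lt_of_le_of_ne (not_lt.mp hsgn) hgi₁
        refine ⟨-g, ?_, i₁, by simpa using hneg⟩
        have : ∑ i : t, (-g) i • v ↑i = -∑ i : t, g i • v ↑i := by
          rw [← Finset.sum_neg_distrib]
          exact Finset.sum_congr rfl fun i _ => by rw [Pi.neg_apply, neg_smul]
        rw [this, hg0, neg_zero]
    set c : ι → ℝ := fun i => if h : i ∈ t then g ⟨i, h⟩ else 0 with hc
    have hceq : ∀ i : t, c ↑i = g i := fun i =>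
      (dif_pos i.2).trans (congrArg g (Subtype.coe_eta i i.2))
    have hcsupp : ∀ i ∉ t, c i = 0 := fun i h => dif_neg h
    have hcsum : ∑ i, c i • v i = 0 := by
      rw [← Finset.sum_subset (Finset.subset_univ t)
        (fun i _ hit => by rw [hcsupp i hit, zero_smul]), ← Finset.sum_coe_sort t]
      rw [show ∑ i : t, c ↑i • v ↑i = ∑ i : t, g i • v ↑i from
        Finset.sum_congr rfl fun i _ => by rw [hceq i]]
      exact hg0
    have hi₂t : (↑i₁ : ι) ∈ t := i₁.2
    have hi₂pos : 0 < c ↑i₁ := by rw [hceq i₁]; exact hgi₁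
    set P : Finset ι := t.filter (fun i => 0 < c i) with hP
    have hPne : P.Nonempty := ⟨↑i₁, Finset.mem_filter.mpr ⟨hi₂t, hi₂pos⟩⟩
    obtain ⟨i₀, hi₀P, hmin⟩ := Finset.exists_min_image P (fun i => lam i / c i) hPne
    have hi₀t : i₀ ∈ t := (Finset.mem_filter.mp hi₀P).1
    have hci₀ : 0 < c i₀ := (Finset.mem_filter.mp hi₀P).2
    set r : ℝ := lam i₀ / c i₀ with hr
    have hr0 : 0 ≤ r := div_nonneg (hlam i₀) hci₀.le
    set lam' : ι → ℝ := fun i => lam i - r * c i with hlam'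
    have hlam'nonneg : ∀ i, 0 ≤ lam' i := by
      intro i
      by_cases hc : 0 < c i
      · have hit : i ∈ t := by
          by_contra hnt; rw [hcsupp i hnt] at hc; exact lt_irrefl 0 hc
        have hiP : i ∈ P := Finset.mem_filter.mpr ⟨hit, hc⟩
        have := hmin i hiP
        have := (le_div_iff₀ hc).mp this
        simp only [hlam', sub_nonneg]; linarith
      · have : r * c i ≤ 0 := mul_nonpos_of_nonneg_of_nonpos hr0 (not_lt.mp hc)
        simp only [hlam', sub_nonneg]; linarith [hlam i]
    have hlam'supp : ∀ i ∉ t.erase i₀, lam' i = 0 := by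
      intro i hi
      by_cases hit : i ∈ t
      · have hii : i = i₀ := by
          by_contra hne
          exact hi (Finset.mem_erase.mpr ⟨hne, hit⟩)
        subst hii
        simp only [hlam', hr]
        rw [div_mul_cancel₀ _ (ne_of_gt hci₀), sub_self]
      · simp only [hlam', hsupp i hit, hcsupp i hit, mul_zero, sub_zero]
    have hsum' : ∑ i, lam' i • v i = ∑ i, lam i • v i := by
      simp only [hlam', sub_smul, Finset.sum_sub_distrib]
      have : ∑ i, (r * c i) • v i = r • ∑ i, c i • v i := by
        rw [Finset.smul_sum]; exact Finset.sum_congr rfl fun i _ => by rw [smul_smul]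
      rw [this, hcsum, smul_zero, sub_zero]
    obtain ⟨s, mu, h1, h2, h3, h4⟩ :=
      ih (t.erase i₀) (Finset.erase_ssubset hi₀t) lam' hlam'nonneg hlam'supp
    exact ⟨s, mu, h1, h2, h3, h4.trans hsum'⟩

/-- A finitely generated cone is closed. -/
lemma isClosed_coneGen {ι : Type*} [Fintype ι] (v : ι → V) :
    IsClosed {x : V | ∃ lam : ι → ℝ, (∀ i, 0 ≤ lam i) ∧ x = ∑ i, lam i • v i} := by
  classical
  have hrw : {x : V | ∃ lam : ι → ℝ, (∀ i, 0 ≤ lam i) ∧ x = ∑ i, lam i • v i} =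
      ⋃ s ∈ {s : Finset ι | LinearIndependent ℝ (fun i : s => v i)},
        (fun lam : s → ℝ => ∑ i : s, lam i • v ↑i) '' {lam | ∀ i, 0 ≤ lam i} := by
    ext x
    simp only [Set.mem_setOf_eq, Set.mem_iUnion, Set.mem_image, exists_prop]
    constructor
    · rintro ⟨lam, h1, h2⟩
      obtain ⟨s, mu, hind, hmu1, hmu2, hmu3⟩ :=
        caratheodory_cone v Finset.univ lam h1 (fun i hi => absurd (Finset.mem_univ i) hi)
      refine ⟨s, hind, fun i : s => mu ↑i, fun i => hmu1 ↑i, ?_⟩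
      rw [h2, ← hmu3, ← Finset.sum_subset (Finset.subset_univ s)
        (fun i _ his => by rw [hmu2 i his, zero_smul]), ← Finset.sum_coe_sort s]
    · rintro ⟨s, hind, lam, h1, h2⟩
      refine ⟨fun i => if h : i ∈ s then lam ⟨i, h⟩ else 0, fun i => ?_, ?_⟩
      · by_cases h : i ∈ s
        · simpa [h] using h1 ⟨i, h⟩
        · simp [h]
      · rw [← h2, ← Finset.sum_subset (Finset.subset_univ s)
          (fun i _ his => by simp [his]), ← Finset.sum_coe_sort s]
        exact Finset.sum_congr rfl fun i _ => by simp [i.2]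
  rw [hrw]
  refine Set.Finite.isClosed_biUnion (Set.toFinite _) ?_
  rintro s hs
  let T : (s → ℝ) →ₗ[ℝ] V :=
    { toFun := fun lam => ∑ i : s, lam i • v ↑i
      map_add' := fun a b => by simp [add_smul, Finset.sum_add_distrib]
      map_smul' := fun c a => by simp [smul_smul, Finset.smul_sum] }
  have hker : LinearMap.ker T = ⊥ := by
    rw [LinearMap.ker_eq_bot']
    intro a ha
    funext i
    exact Fintype.linearIndependent_iff.mp hs a ha i
  have hemb : IsClosedEmbedding T := LinearMap.isClosedEmbedding_of_injective hker
  have hcl : IsClosed {lam : s → ℝ | ∀ i, 0 ≤ lam i} := by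
    have : {lam : s → ℝ | ∀ i, 0 ≤ lam i} = ⋂ i, (fun lam : s → ℝ => lam i) ⁻¹' Set.Ici 0 := by
      ext a; simp [Set.mem_iInter]
    rw [this]
    exact isClosed_iInter fun i => isClosed_Ici.preimage (continuous_apply i)
  exact hemb.isClosedMap _ hcl

/-- Farkas' lemma: if `⟪w, d⟫ ≤ 0` whenever `⟪v i, d⟫ ≤ 0` for all `i`, then `w` is a
nonnegative combination of the `v i`. -/
lemma farkas {ι : Type*} [Fintype ι] (v : ι → V) (w : V)
    (h : ∀ d : V, (∀ i, inner ℝ (v i) d ≤ (0 : ℝ)) → inner ℝ w d ≤ (0 : ℝ)) :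
    ∃ lam : ι → ℝ, (∀ i, 0 ≤ lam i) ∧ w = ∑ i, lam i • v i := by
  classical
  haveI : CompleteSpace V := FiniteDimensional.complete ℝ V
  set K : ConvexCone ℝ V :=
    { carrier := {x : V | ∃ lam : ι → ℝ, (∀ i, 0 ≤ lam i) ∧ x = ∑ i, lam i • v i}
      smul_mem' := by
        rintro c hc x ⟨lam, h1, h2⟩
        exact ⟨fun i => c * lam i, fun i => mul_nonneg hc.le (h1 i), by
          rw [h2, Finset.smul_sum]; exact Finset.sum_congr rfl fun i _ => by rw [smul_smul]⟩
      add_mem' := by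
        rintro x ⟨lam, h1, h2⟩ y ⟨mu, h3, h4⟩
        exact ⟨fun i => lam i + mu i, fun i => add_nonneg (h1 i) (h3 i), by
          rw [h2, h4, ← Finset.sum_add_distrib]
          exact Finset.sum_congr rfl fun i _ => by rw [add_smul]⟩ } with hK
  by_contra hcon
  have hwK : w ∉ K := fun hmem => hcon hmem
  have hne : (K : Set V).Nonempty := ⟨0, ⟨fun _ => 0, fun i => le_refl 0, by simp⟩⟩
  have hclosed : IsClosed (K : Set V) := isClosed_coneGen v
  obtain ⟨y, hy1, hy2⟩ : ∃ y, (∀ x ∈ K, 0 ≤ inner ℝ x y) ∧ inner ℝ y w < 0 := by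
    obtain ⟨y, h1, h2⟩ := ProperCone.hyperplane_separation'
      (⟨K.toPointedCone (ConvexCone.Pointed.of_nonempty_of_isClosed hne hclosed), hclosed⟩ :
        ProperCone ℝ V) (x₀ := w) hwK
    exact ⟨y, h1, by rwa [real_inner_comm]⟩
  have hvy : ∀ i, inner ℝ (v i) (-y) ≤ (0 : ℝ) := by
    intro i
    have hviK : v i ∈ K := ⟨fun j => if j = i then 1 else 0, fun j => by positivity, by
      simp [ite_smul]⟩
    have := hy1 (v i) hviK
    rw [inner_neg_right]
    linarith
  have hw := h (-y) hvy
  rw [inner_neg_right] at hw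
  rw [real_inner_comm] at hy2
  linarith

end FarkasAux

/-- If `φ` is locally minimized at `x` over `S` (in the filter sense), then the gradient of
`φ` at `x` has nonnegative inner product with every tangent direction of `S` at `x`. -/
lemma grad_inner_nonneg_of_tcone {V : Type*} [NormedAddCommGroup V] [InnerProductSpace ℝ V]
    [CompleteSpace V] {φ : V → ℝ} {S : Set V} {x : V} (hφ : DifferentiableAt ℝ φ x)
    (hloc : ∀ᶠ z in 𝓝 x, z ∈ S → φ x ≤ φ z) :
    ∀ d ∈ tcone S x, 0 ≤ (inner ℝ (gradient φ x) d : ℝ) := by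
  rintro d ⟨xs, lam, hmem, hlam, hxs, hd⟩
  have hA := hφ.hasFDerivAt
  set A := fderiv ℝ φ x with hAdef
  have h1 : Tendsto (fun k => A (lam k • (xs k - x))) atTop (𝓝 (A d)) :=
    (A.continuous.tendsto d).comp hd
  have h2 : Tendsto (fun k => ‖xs k - x‖⁻¹ * ‖φ (xs k) - φ x - A (xs k - x)‖) atTop (𝓝 0) :=
    (hasFDerivAt_iff_tendsto.mp hA).comp hxs
  have h3 : Tendsto (fun k => ‖lam k • (xs k - x)‖) atTop (𝓝 ‖d‖) := hd.norm
  have h4 : Tendsto (fun k => lam k * (φ (xs k) - φ x) - A (lam k • (xs k - x))) atTop (𝓝 0) := by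
    have hbd : ∀ k, ‖lam k * (φ (xs k) - φ x) - A (lam k • (xs k - x))‖
        ≤ ‖lam k • (xs k - x)‖ * (‖xs k - x‖⁻¹ * ‖φ (xs k) - φ x - A (xs k - x)‖) := ?_
    · exact squeeze_zero_norm hbd (by simpa using h3.mul h2)
    · intro k
      rcases eq_or_ne (xs k - x) 0 with h0 | h0
      · have hxk : xs k = x := by rwa [sub_eq_zero] at h0
        simp [hxk]
      · have hlk := hlam k
        have hnorm : ‖xs k - x‖ ≠ 0 := norm_ne_zero_iff.mpr h0
        have e1 : lam k * (φ (xs k) - φ x) - A (lam k • (xs k - x))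
            = lam k * (φ (xs k) - φ x - A (xs k - x)) := by
          rw [A.map_smul, smul_eq_mul]; ring
        have e2 : ‖xs k - x‖ * (‖xs k - x‖⁻¹ * ‖φ (xs k) - φ x - A (xs k - x)‖)
            = ‖φ (xs k) - φ x - A (xs k - x)‖ := by
          rw [← mul_assoc, mul_inv_cancel₀ hnorm, one_mul]
        refine le_of_eq ?_
        rw [e1, norm_smul, Real.norm_of_nonneg hlk, mul_assoc, e2, norm_mul,
          Real.norm_of_nonneg hlk]
  have h5 : Tendsto (fun k => lam k * (φ (xs k) - φ x)) atTop (𝓝 (A d)) := by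
    have heq : (fun k => lam k * (φ (xs k) - φ x))
        = fun k => A (lam k • (xs k - x)) +
            (lam k * (φ (xs k) - φ x) - A (lam k • (xs k - x))) := by
      funext k; ring
    rw [heq]
    simpa using h1.add h4
  have h6 : ∀ᶠ k in atTop, 0 ≤ lam k * (φ (xs k) - φ x) := by
    filter_upwards [hxs.eventually hloc] with k hk
    exact mul_nonneg (hlam k) (sub_nonneg.mpr (hk (hmem k)))
  have h7 : 0 ≤ A d := ge_of_tendsto h5 h6
  have h8 : (inner ℝ (gradient φ x) d : ℝ) = A d := InnerProductSpace.toDual_symm_apply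
  rw [h8]
  exact h7

set_option maxHeartbeats 2000000 in
/-- if `x*` is a local minimizer of (MPVC) at which the Guignard
constraint qualification `T(M,x*)⁻ = L(x*)⁻` holds, then there are multipliers
`y* ∈ ℝᵐ`, `η_H, η_G ∈ ℝˡ` with the stated sign conditions such that
`-∇f(x*) - Σ y*_j ∇g_j(x*) - Σ (η_H)_i ∇H_i(x*) - Σ (η_G)_i ∇G_i(x*) ∈ T(C,x*)⁻`. -/
theorem mpvc_strong_stationarity {n m l : ℕ}
    (f : EuclideanSpace ℝ (Fin n) → ℝ)
    (g : EuclideanSpace ℝ (Fin n) → EuclideanSpace ℝ (Fin m))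
    (G H : Fin l → EuclideanSpace ℝ (Fin n) → ℝ)
    (C : Set (EuclideanSpace ℝ (Fin n)))
    (hf : ContDiff ℝ 2 f) (hg : ContDiff ℝ 2 g)
    (hG : ∀ i, ContDiff ℝ 2 (G i)) (hH : ∀ i, ContDiff ℝ 2 (H i))
    (hCne : C.Nonempty) (hCcl : IsClosed C) (hCcv : Convex ℝ C)
    -- the feasible set M of (MPVC)
    (M : Set (EuclideanSpace ℝ (Fin n)))
    (hM : M = {x | x ∈ C ∧ g x = 0 ∧ ∀ i, 0 ≤ H i x ∧ 0 ≤ G i x * H i x})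
    (xstar : EuclideanSpace ℝ (Fin n))
    -- x* is a local minimizer of (MPVC)
    (hfeas : xstar ∈ M)
    (hmin : ∃ ε > 0, ∀ x ∈ M, dist x xstar < ε → f xstar ≤ f x)
    -- the linearized cone L(x*)
    (L : Set (EuclideanSpace ℝ (Fin n)))
    (hL : L = {d | (∀ j, inner ℝ (gradient (fun x => g x j) xstar) d = (0 : ℝ)) ∧
      (∀ i, H i xstar = 0 → G i xstar < 0 →
        inner ℝ (gradient (H i) xstar) d = (0 : ℝ)) ∧
      (∀ i, H i xstar = 0 → 0 ≤ G i xstar →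
        inner ℝ (gradient (H i) xstar) d ≤ (0 : ℝ)) ∧
      (∀ i, 0 < H i xstar → G i xstar = 0 →
        inner ℝ (gradient (G i) xstar) d ≤ (0 : ℝ))})
    -- Guignard constraint qualification
    (hGCQ : polarCone (tcone M xstar) = polarCone L) :
    ∃ (y : Fin m → ℝ) (ηH ηG : Fin l → ℝ),
      (∀ i, 0 < H i xstar → ηH i = 0) ∧
      (∀ i, H i xstar = 0 → 0 ≤ G i xstar → ηH i ≤ 0) ∧
      (∀ i, H i xstar = 0 → ηG i = 0) ∧
      (∀ i, 0 < H i xstar → 0 < G i xstar → ηG i = 0) ∧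
      (∀ i, 0 < H i xstar → G i xstar = 0 → ηG i ≤ 0) ∧
      (-(gradient f xstar) - ∑ j, y j • gradient (fun x => g x j) xstar
          - ∑ i, ηH i • gradient (H i) xstar - ∑ i, ηG i • gradient (G i) xstar)
        ∈ polarCone (tcone C xstar) := by
  classical
  -- abbreviations
  set fd : EuclideanSpace ℝ (Fin n) := gradient f xstar with hfd
  set gd : Fin m → EuclideanSpace ℝ (Fin n) := fun j => gradient (fun x => g x j) xstar with hgd
  set Hd : Fin l → EuclideanSpace ℝ (Fin n) := fun i => gradient (H i) xstar with hHd
  set Gd : Fin l → EuclideanSpace ℝ (Fin n) := fun i => gradient (G i) xstar with hGdd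
  -- differentiability
  have hfdiff : DifferentiableAt ℝ f xstar := (hf.differentiable (by norm_num)).differentiableAt
  have hHdiff : ∀ i, DifferentiableAt ℝ (H i) xstar :=
    fun i => ((hH i).differentiable (by norm_num)).differentiableAt
  have hGdiff : ∀ i, DifferentiableAt ℝ (G i) xstar :=
    fun i => ((hG i).differentiable (by norm_num)).differentiableAt
  -- facts from local minimality, via the tangent cone and GCQ
  have key : ∀ w : EuclideanSpace ℝ (Fin n), (∀ d ∈ tcone M xstar, 0 ≤ (inner ℝ w d : ℝ)) →
      ∀ d ∈ L, 0 ≤ (inner ℝ w d : ℝ) := by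
    intro w hw d hd
    have hmem : (-w) ∈ polarCone (tcone M xstar) := by
      intro v hv
      rw [inner_neg_left]
      linarith [hw v hv]
    rw [hGCQ] at hmem
    have := hmem d hd
    rw [inner_neg_left] at this
    linarith
  -- f
  have hfL : ∀ d ∈ L, 0 ≤ (inner ℝ fd d : ℝ) := by
    apply key
    apply grad_inner_nonneg_of_tcone hfdiff
    obtain ⟨ε, hε, hloc⟩ := hmin
    filter_upwards [Metric.ball_mem_nhds xstar hε] with z hz hzM
    exact hloc z hzM (Metric.mem_ball.mp hz)
  -- H i for active indices
  have hHL : ∀ i, H i xstar = 0 → ∀ d ∈ L, 0 ≤ (inner ℝ (Hd i) d : ℝ) := by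
    intro i hi
    apply key
    apply grad_inner_nonneg_of_tcone (hHdiff i)
    apply Filter.Eventually.of_forall
    intro z hzM
    rw [hM] at hzM
    rw [hi]
    exact (hzM.2.2 i).1
  -- G i for indices with H > 0, G = 0
  have hGL : ∀ i, 0 < H i xstar → G i xstar = 0 → ∀ d ∈ L, 0 ≤ (inner ℝ (Gd i) d : ℝ) := by
    intro i hiH hiG
    apply key
    apply grad_inner_nonneg_of_tcone (hGdiff i)
    have hHcont : ContinuousAt (H i) xstar := (hH i).continuous.continuousAt
    filter_upwards [hHcont.eventually (eventually_gt_nhds hiH)] with z hz hzM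
    rw [hM] at hzM
    rw [hiG]
    nlinarith [(hzM.2.2 i).2, hz]
  -- L is symmetric
  have hLsym : ∀ d ∈ L, -d ∈ L := by
    intro d hd
    have hd' := hd
    rw [hL] at hd' ⊢
    obtain ⟨e1, e2, e3, e4⟩ := hd'
    refine ⟨fun j => by rw [inner_neg_right, e1 j, neg_zero],
      fun i h1 h2 => by rw [inner_neg_right, e2 i h1 h2, neg_zero],
      fun i h1 h2 => ?_, fun i h1 h2 => ?_⟩
    · rw [inner_neg_right]
      have := hHL i h1 d hd
      linarith
    · rw [inner_neg_right]
      have := hGL i h1 h2 d hd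
      linarith
  -- Farkas setup
  set vv : ((Fin m ⊕ Fin m) ⊕ (Fin l ⊕ Fin l) ⊕ Fin l) → EuclideanSpace ℝ (Fin n) :=
    Sum.elim (Sum.elim (fun j => gd j) (fun j => -gd j))
      (Sum.elim (Sum.elim (fun i => if H i xstar = 0 ∧ G i xstar < 0 then Hd i else 0)
          (fun i => if H i xstar = 0 then -Hd i else 0))
        (fun i => if 0 < H i xstar ∧ G i xstar = 0 then -Gd i else 0)) with hvv
  have hfar : ∀ d : EuclideanSpace ℝ (Fin n),
      (∀ idx, inner ℝ (vv idx) d ≤ (0 : ℝ)) → inner ℝ (-fd) d ≤ (0 : ℝ) := by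
    intro d hall
    have hgz : ∀ j, inner ℝ (gd j) d = (0 : ℝ) := by
      intro j
      have h1 := hall (Sum.inl (Sum.inl j))
      have h2 := hall (Sum.inl (Sum.inr j))
      simp only [hvv, Sum.elim_inl, Sum.elim_inr, inner_neg_left] at h1 h2
      linarith
    have hndL : -d ∈ L := by
      rw [hL]
      refine ⟨fun j => by rw [inner_neg_right, hgz j, neg_zero],
        fun i h1 h2 => ?_, fun i h1 h2 => ?_, fun i h1 h2 => ?_⟩
      · have ha := hall (Sum.inr (Sum.inl (Sum.inl i)))
        have hb := hall (Sum.inr (Sum.inl (Sum.inr i)))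
        simp only [hvv, Sum.elim_inl, Sum.elim_inr, if_pos (And.intro h1 h2), if_pos h1,
          inner_neg_left] at ha hb
        rw [inner_neg_right]
        linarith
      · have hb := hall (Sum.inr (Sum.inl (Sum.inr i)))
        simp only [hvv, Sum.elim_inl, Sum.elim_inr, if_pos h1, inner_neg_left] at hb
        rw [inner_neg_right]
        linarith
      · have hc := hall (Sum.inr (Sum.inr i))
        simp only [hvv, Sum.elim_inl, Sum.elim_inr, if_pos (And.intro h1 h2),
          inner_neg_left] at hc
        rw [inner_neg_right]
        linarith
    have hdL : d ∈ L := by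
      have := hLsym _ hndL
      rwa [neg_neg] at this
    have := hfL d hdL
    rw [inner_neg_left]
    linarith
  obtain ⟨lam, hlampos, hsum⟩ := farkas vv (-fd) hfar
  -- define the multipliers
  refine ⟨fun j => lam (Sum.inl (Sum.inl j)) - lam (Sum.inl (Sum.inr j)),
    fun i => (if H i xstar = 0 ∧ G i xstar < 0 then lam (Sum.inr (Sum.inl (Sum.inl i))) else 0)
      - (if H i xstar = 0 then lam (Sum.inr (Sum.inl (Sum.inr i))) else 0),
    fun i => -(if 0 < H i xstar ∧ G i xstar = 0 then lam (Sum.inr (Sum.inr i)) else 0),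
    ?_, ?_, ?_, ?_, ?_, ?_⟩
  · intro i hi
    have h1 : ¬(H i xstar = 0 ∧ G i xstar < 0) := fun h => absurd h.1 (ne_of_gt hi)
    have h2 : ¬(H i xstar = 0) := ne_of_gt hi
    simp [h1, h2]
  · intro i h1 h2
    have hc : ¬(H i xstar = 0 ∧ G i xstar < 0) := fun h => absurd h.2 (not_lt.mpr h2)
    simp only [if_neg hc, if_pos h1, zero_sub, neg_nonpos]
    exact hlampos _
  · intro i hi
    have hc : ¬(0 < H i xstar ∧ G i xstar = 0) := fun h => absurd hi (ne_of_gt h.1)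
    simp [hc]
  · intro i h1 h2
    have hc : ¬(0 < H i xstar ∧ G i xstar = 0) := fun h => absurd h.2 (ne_of_gt h2)
    simp [hc]
  · intro i h1 h2
    simp only [if_pos (And.intro h1 h2), neg_nonpos]
    exact hlampos _
  · -- the stationarity condition: the expression is 0
    have hexpr : (-fd - ∑ j, (lam (Sum.inl (Sum.inl j)) - lam (Sum.inl (Sum.inr j))) • gd j
        - ∑ i, ((if H i xstar = 0 ∧ G i xstar < 0 then lam (Sum.inr (Sum.inl (Sum.inl i))) else 0)
            - (if H i xstar = 0 then lam (Sum.inr (Sum.inl (Sum.inr i))) else 0)) • Hd i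
        - ∑ i, (-(if 0 < H i xstar ∧ G i xstar = 0 then lam (Sum.inr (Sum.inr i)) else 0)) • Gd i)
        = 0 := by
      rw [hsum]
      simp only [Fintype.sum_sum_type]
      have e1 : ∑ j, (lam (Sum.inl (Sum.inl j)) - lam (Sum.inl (Sum.inr j))) • gd j
          = ∑ j, lam (Sum.inl (Sum.inl j)) • vv (Sum.inl (Sum.inl j))
            + ∑ j, lam (Sum.inl (Sum.inr j)) • vv (Sum.inl (Sum.inr j)) := by
        rw [← Finset.sum_add_distrib]
        refine Finset.sum_congr rfl fun j _ => ?_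
        simp only [hvv, Sum.elim_inl, Sum.elim_inr, smul_neg, sub_smul]
        abel
      have e2 : ∑ i, ((if H i xstar = 0 ∧ G i xstar < 0
              then lam (Sum.inr (Sum.inl (Sum.inl i))) else 0)
            - (if H i xstar = 0 then lam (Sum.inr (Sum.inl (Sum.inr i))) else 0)) • Hd i
          = ∑ i, lam (Sum.inr (Sum.inl (Sum.inl i))) • vv (Sum.inr (Sum.inl (Sum.inl i)))
            + ∑ i, lam (Sum.inr (Sum.inl (Sum.inr i))) • vv (Sum.inr (Sum.inl (Sum.inr i))) := by
        rw [← Finset.sum_add_distrib]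
        refine Finset.sum_congr rfl fun i _ => ?_
        simp only [hvv, Sum.elim_inl, Sum.elim_inr]
        by_cases h1 : H i xstar = 0 ∧ G i xstar < 0 <;> by_cases h2 : H i xstar = 0 <;>
          simp [h1, h2, sub_smul, smul_neg] <;> abel
      have e3 : ∑ i, (-(if 0 < H i xstar ∧ G i xstar = 0
              then lam (Sum.inr (Sum.inr i)) else 0)) • Gd i
          = ∑ i, lam (Sum.inr (Sum.inr i)) • vv (Sum.inr (Sum.inr i)) := by
        refine Finset.sum_congr rfl fun i _ => ?_
        simp only [hvv, Sum.elim_inl, Sum.elim_inr]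
        by_cases h1 : 0 < H i xstar ∧ G i xstar = 0 <;> simp [h1, smul_neg, neg_smul]
      rw [e1, e2, e3]
      abel
    rw [hexpr]
    intro v hv
    simp [inner_zero_left]
end
end

section
/- Let C ⊆ ℝⁿ be nonempty, closed and convex, let f : ℝⁿ → ℝ and c : ℝⁿ → ℝᵐ be continuously differentiable, fix x̂ ∈ ℝⁿ, ŷ ∈ ℝᵐ, λ > 0, ρ ≥ 0, and set Δt = 1/λ. A pair (x, w) ∈ C × ℝᵐ satisfies the first-order (KKT) conditions of (Sub-NLP), namely c(x) + λw = 0 together with the existence of μ ∈ ℝᵐ such that λ(w − ŷ) + λμ = 0 and −∇f^ρ(x) − λ(x − x̂) − J_c(x)ᵀμ belongs to the normal cone T(C,x)⁻, if and only if, with y := ŷ − w, the projected backward Euler equations hold: x = P_C(x̂ − Δt·∇ₓL^ρ(x, y)) and y = ŷ + Δt·∇_y L^ρ(x, y). -/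
noncomputable section

open Filter Topology

section aux

variable {F : Type*} [NormedAddCommGroup F] [InnerProductSpace ℝ F] [CompleteSpace F]

lemma HasGradientAt.add' {f g : F → ℝ} {a b : F} {x : F}
    (hf : HasGradientAt f a x) (hg : HasGradientAt g b x) :
    HasGradientAt (fun z => f z + g z) (a + b) x := by
  rw [hasGradientAt_iff_hasFDerivAt] at *
  have := hf.add hg
  simp only [map_add]
  exact this

lemma HasGradientAt.const_mul' {f : F → ℝ} {a : F} {x : F} (r : ℝ)
    (hf : HasGradientAt f a x) :
    HasGradientAt (fun z => r * f z) (r • a) x := by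
  rw [hasGradientAt_iff_hasFDerivAt] at *
  simpa [map_smul] using hf.const_mul r

lemma HasGradientAt.sum' {ι : Type*} (s : Finset ι) {f : ι → F → ℝ} {a : ι → F} {x : F}
    (h : ∀ i ∈ s, HasGradientAt (f i) (a i) x) :
    HasGradientAt (fun z => ∑ i ∈ s, f i z) (∑ i ∈ s, a i) x := by
  simp only [hasGradientAt_iff_hasFDerivAt] at *
  simpa [map_sum] using HasFDerivAt.fun_sum h

lemma mem_polar_tcone_iff {C : Set F} (hC : Convex ℝ C) {x : F} (hx : x ∈ C) (v : F) :
    v ∈ polarCone (tcone C x) ↔ ∀ u ∈ C, (inner ℝ v (u - x) : ℝ) ≤ 0 := by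
  constructor
  · intro h u hu
    apply h
    refine ⟨fun k => x + ((k : ℝ) + 1)⁻¹ • (u - x), fun k => (k : ℝ) + 1, fun k => ?_,
      fun k => by positivity, ?_, ?_⟩
    · have ht0 : (0 : ℝ) ≤ ((k : ℝ) + 1)⁻¹ := by positivity
      have ht1 : ((k : ℝ) + 1)⁻¹ ≤ 1 := by
        rw [inv_le_one_iff₀]; right; linarith [Nat.cast_nonneg (α := ℝ) k]
      have := hC hx hu (by linarith : (0:ℝ) ≤ 1 - ((k : ℝ) + 1)⁻¹) ht0 (by ring)
      convert this using 1
      module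
    · have h0 : Tendsto (fun k : ℕ => ((k : ℝ) + 1)⁻¹) atTop (𝓝 0) := by
        simpa [one_div] using tendsto_one_div_add_atTop_nhds_zero_nat (𝕜 := ℝ)
      have := (h0.smul_const (u - x)).const_add x
      simpa using this
    · have : (fun k : ℕ => ((k : ℝ) + 1) • (x + ((k : ℝ) + 1)⁻¹ • (u - x) - x)) =
        fun _ : ℕ => u - x := by
        funext k
        have hk : ((k : ℝ) + 1) ≠ 0 := by positivity
        rw [add_sub_cancel_left, smul_smul, mul_inv_cancel₀ hk, one_smul]
      rw [this]
      exact tendsto_const_nhds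
  · intro h d hd
    obtain ⟨xs, lamk, hmem, hpos, _, hlim⟩ := hd
    have hten : Tendsto (fun k => (inner ℝ v (lamk k • (xs k - x)) : ℝ)) atTop
        (𝓝 (inner ℝ v d)) := tendsto_const_nhds.inner hlim
    refine le_of_tendsto hten (Eventually.of_forall fun k => ?_)
    rw [real_inner_smul_right]
    exact mul_nonpos_iff.mpr (Or.inl ⟨hpos k, h _ (hmem k)⟩)

end aux

/-- a pair `(x, w) ∈ C × ℝᵐ` satisfies the first-order KKT conditions
of (Sub-NLP) iff, with `y := ŷ − w`, the projected backward Euler equations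
`x = P_C(x̂ − Δt·∇ₓL^ρ(x,y))` and `y = ŷ + Δt·∇_y L^ρ(x,y)` hold (with `Δt = 1/λ`,
and `P_C(z) = x` characterized by `x ∈ C` and `⟨z − x, u − x⟩ ≤ 0` for all `u ∈ C`). -/
theorem subnlp_kkt_iff_backward_euler {n m : ℕ}
    (C : Set (EuclideanSpace ℝ (Fin n)))
    (hCne : C.Nonempty) (hCcl : IsClosed C) (hCcv : Convex ℝ C)
    (f : EuclideanSpace ℝ (Fin n) → ℝ)
    (c : EuclideanSpace ℝ (Fin n) → EuclideanSpace ℝ (Fin m))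
    (hf : ContDiff ℝ 1 f) (hc : ContDiff ℝ 1 c)
    (xh : EuclideanSpace ℝ (Fin n)) (yh : EuclideanSpace ℝ (Fin m))
    (lam ρ : ℝ) (hlam : 0 < lam) (hρ : 0 ≤ ρ)
    (Δt : ℝ) (hΔt : Δt = 1 / lam)
    (x : EuclideanSpace ℝ (Fin n)) (hx : x ∈ C) (w : EuclideanSpace ℝ (Fin m))
    (y : EuclideanSpace ℝ (Fin m)) (hy : y = yh - w) :
    -- KKT conditions of (Sub-NLP)
    ((c x + lam • w = 0 ∧
      ∃ μ : EuclideanSpace ℝ (Fin m),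
        lam • (w - yh) + lam • μ = 0 ∧
        (-(gradient (fun z => f z + ρ / 2 * ‖c z‖ ^ 2) x) - lam • (x - xh)
            - ∑ j, μ j • gradient (fun z => c z j) x)
          ∈ polarCone (tcone C x)) ↔
    -- projected backward Euler equations
    ((∀ u ∈ C,
        (inner ℝ
          ((xh - Δt • gradient
              (fun z => f z + (inner ℝ y (c z) : ℝ) + ρ / 2 * ‖c z‖ ^ 2) x) - x)
          (u - x) : ℝ) ≤ 0) ∧
      y = yh + Δt • c x)) := by
  have hlam0 : lam ≠ 0 := ne_of_gt hlam
  have hΔtlam : Δt * lam = 1 := by rw [hΔt]; field_simp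
  have hΔtpos : 0 < Δt := by rw [hΔt]; positivity
  -- differentiability facts
  have hcd : DifferentiableAt ℝ c x := (hc.differentiable one_ne_zero).differentiableAt
  have hfd : DifferentiableAt ℝ f x := (hf.differentiable one_ne_zero).differentiableAt
  have hcj : ∀ j, DifferentiableAt ℝ (fun z => c z j) x := fun j => by
    exact ((EuclideanSpace.proj j).differentiableAt.comp x hcd)
  have hF1d : DifferentiableAt ℝ (fun z => f z + ρ / 2 * ‖c z‖ ^ 2) x := by
    exact hfd.add ((differentiableAt_const _).mul
      (((contDiff_norm_sq (𝕜 := ℝ)).comp hc).differentiable one_ne_zero).differentiableAt)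
  set gp := gradient (fun z => f z + ρ / 2 * ‖c z‖ ^ 2) x with hgp
  set gc : Fin m → EuclideanSpace ℝ (Fin n) := fun j => gradient (fun z => c z j) x with hgc
  -- gradient of the inner-product part
  have hinner : HasGradientAt (fun z => (inner ℝ y (c z) : ℝ)) (∑ j, y j • gc j) x := by
    have hsum : HasGradientAt (fun z => ∑ j, y j * c z j) (∑ j, y j • gc j) x := by
      refine HasGradientAt.sum' _ fun j _ => ?_
      exact HasGradientAt.const_mul' (y j) (hcj j).hasGradientAt
    have heq : (fun z => (inner ℝ y (c z) : ℝ)) = fun z => ∑ j, y j * c z j := by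
      funext z
      simp [PiLp.inner_apply, RCLike.inner_apply, mul_comm]
    rw [heq]
    exact hsum
  -- gradient of the full Lagrangian
  have hkey : gradient (fun z => f z + (inner ℝ y (c z) : ℝ) + ρ / 2 * ‖c z‖ ^ 2) x
      = gp + ∑ j, y j • gc j := by
    have h1 : HasGradientAt (fun z => f z + ρ / 2 * ‖c z‖ ^ 2) gp x := hF1d.hasGradientAt
    have h3 := h1.add' hinner
    have heq : (fun z => (f z + ρ / 2 * ‖c z‖ ^ 2) + (inner ℝ y (c z) : ℝ)) =
        fun z => f z + (inner ℝ y (c z) : ℝ) + ρ / 2 * ‖c z‖ ^ 2 := by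
      funext z; ring
    rw [heq] at h3
    exact h3.gradient
  rw [hkey]
  constructor
  · rintro ⟨hceq, μ, hμeq, hpol⟩
    have hμ : μ = y := by
      have : lam • (w - yh + μ) = 0 := by rw [smul_add]; exact hμeq
      have h2 : w - yh + μ = 0 := by
        rcases smul_eq_zero.mp this with h | h
        · exact absurd h hlam0
        · exact h
      have : μ = yh - w := by linear_combination (norm := module) h2
      rw [this, hy]
    rw [hμ] at hpol
    constructor
    · intro u hu
      have hv := (mem_polar_tcone_iff hCcv hx _).mp hpol u hu
      have harr : xh - Δt • (gp + ∑ j, y j • gc j) - x =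
          Δt • (-gp - lam • (x - xh) - ∑ j, y j • gc j) := by
        have : Δt • (lam • (x - xh)) = x - xh := by
          rw [smul_smul, hΔtlam, one_smul]
        rw [smul_sub, smul_sub, this]
        module
      rw [harr, real_inner_smul_left]
      exact mul_nonpos_iff.mpr (Or.inl ⟨le_of_lt hΔtpos, hv⟩)
    · rw [hy]
      have : Δt • c x = -w := by
        have hcw : c x = -(lam • w) := by linear_combination (norm := module) hceq
        rw [hcw, smul_neg, smul_smul, hΔtlam, one_smul]
      rw [this]
      module
  · rintro ⟨hvi, hyeq⟩
    have hw : Δt • c x = -w := by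
      have : yh - w = yh + Δt • c x := by rw [← hy, hyeq]
      linear_combination (norm := module) -this
    constructor
    · have : lam • (Δt • c x) = c x := by rw [smul_smul, mul_comm, hΔtlam, one_smul]
      rw [hw, smul_neg] at this
      linear_combination (norm := module) this.symm
    · refine ⟨y, ?_, ?_⟩
      · rw [hy]; module
      · rw [mem_polar_tcone_iff hCcv hx]
        intro u hu
        have hv := hvi u hu
        have harr : -gp - lam • (x - xh) - ∑ j, y j • gc j =
            lam • (xh - Δt • (gp + ∑ j, y j • gc j) - x) := by
          have h2 : lam • (Δt • (gp + ∑ j, y j • gc j)) = gp + ∑ j, y j • gc j := by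
            rw [smul_smul, mul_comm, hΔtlam, one_smul]
          linear_combination (norm := module) h2
        rw [harr, real_inner_smul_left]
        exact mul_nonpos_iff.mpr (Or.inl ⟨le_of_lt hlam, hv⟩)
end
end

section
/- Let (x*, s*, y*) with y* = (y_g, y_H, y_G) ∈ ℝᵐ × ℝˡ × ℝˡ be a strong stationary point of (MPVCS), meaning: (x*, s*) is feasible for (MPVCS); −∇ₓ[f + ⟨y_g, g⟩ + Σᵢ y_{H,i} H_i + Σᵢ y_{G,i} G_i](x*) ∈ T(C, x*)⁻; and the multipliers satisfy y_{H,i} = 0 for i ∈ I₊, y_{H,i} ≤ 0 for i ∈ I₀₀ ∪ I₀₊, y_{G,i} = 0 for i ∈ I₀ ∪ I₊₊, and y_{G,i} ≤ 0 for i ∈ I₊₀ (index sets evaluated at x*). Then for every signature σ ∈ {0,1}ˡ with s* ∈ C^b(σ): −∇_{(x,s)} L^ρ(x*, s*, y*) ∈ T(C × C^b(σ), (x*, s*))⁻ (equivalently, the metric projection of −∇_{(x,s)} L^ρ(x*, s*, y*) onto the tangent cone T(C × C^b(σ), (x*, s*)) is zero), and ∇_y L^ρ(x*, s*, y*) = 0;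 i.e., (x*, s*, y*) is an equilibrium point of the branch gradient/anti-gradient flow for every compatible signature. -/
noncomputable section

open Filter Topology

/-- The Euclidean inner product on the product space `ℝⁿ × (ℝˡ × ℝˡ)` of the primal
variable and the two slack blocks. -/
def pInner {n l : ℕ}
    (a b : EuclideanSpace ℝ (Fin n) × EuclideanSpace ℝ (Fin l) × EuclideanSpace ℝ (Fin l)) :
    ℝ :=
  inner ℝ a.1 b.1 + inner ℝ a.2.1 b.2.1 + inner ℝ a.2.2 b.2.2

/-- The branch set `C^b(σ)`: for each `i`, `s_{H,i} ≥ 0 ∧ s_{G,i} ≥ 0` if `σ_i = 1`,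
and `s_{H,i} = 0 ∧ s_{G,i} ≤ 0` if `σ_i = 0`. -/
def branchSet {l : ℕ} (σ : Fin l → Bool) :
    Set (EuclideanSpace ℝ (Fin l) × EuclideanSpace ℝ (Fin l)) :=
  {s | ∀ i, (σ i = true → 0 ≤ s.1 i ∧ 0 ≤ s.2 i) ∧
            (σ i = false → s.1 i = 0 ∧ s.2 i ≤ 0)}

/-- The augmented Lagrangian `L^ρ(x, s, y)` of (MPVCS) with multiplier
`y = (y_g, y_H, y_G)`. -/
def Lrho {n m l : ℕ} (f : EuclideanSpace ℝ (Fin n) → ℝ)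
    (g : EuclideanSpace ℝ (Fin n) → EuclideanSpace ℝ (Fin m))
    (G H : Fin l → EuclideanSpace ℝ (Fin n) → ℝ) (ρ : ℝ)
    (yg : EuclideanSpace ℝ (Fin m)) (yH yG : EuclideanSpace ℝ (Fin l))
    (x : EuclideanSpace ℝ (Fin n)) (sH sG : EuclideanSpace ℝ (Fin l)) : ℝ :=
  f x + (inner ℝ yg (g x) : ℝ) + (∑ i, yH i * (H i x - sH i)) + (∑ i, yG i * (G i x - sG i))
    + ρ / 2 * (‖g x‖ ^ 2 + (∑ i, (H i x - sH i) ^ 2) + ∑ i, (G i x - sG i) ^ 2)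


section Helpers
variable {V W : Type*} [NormedAddCommGroup V] [NormedSpace ℝ V]
  [NormedAddCommGroup W] [NormedSpace ℝ W]

lemma tcone_fst {S : Set V} {T : Set W} {a : V} {b : W} {v : V × W}
    (hv : v ∈ tcone (S ×ˢ T) (a, b)) : v.1 ∈ tcone S a := by
  obtain ⟨xs, lam, hmem, hlam, hx, hd⟩ := hv
  refine ⟨fun k => (xs k).1, lam, fun k => (hmem k).1, hlam,
    (continuous_fst.tendsto _).comp hx, ?_⟩
  have := (continuous_fst.tendsto v).comp hd
  simpa [Function.comp_def] using this

lemma tcone_snd {S : Set V} {T : Set W} {a : V} {b : W} {v : V × W}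
    (hv : v ∈ tcone (S ×ˢ T) (a, b)) : v.2 ∈ tcone T b := by
  obtain ⟨xs, lam, hmem, hlam, hx, hd⟩ := hv
  refine ⟨fun k => (xs k).2, lam, fun k => (hmem k).2, hlam,
    (continuous_snd.tendsto _).comp hx, ?_⟩
  have := (continuous_snd.tendsto v).comp hd
  simpa [Function.comp_def] using this

lemma tcone_le {T : Set W} {b : W} (φ : W →L[ℝ] ℝ) (hT : ∀ p ∈ T, 0 ≤ φ p)
    (hb : φ b = 0) {v : W} (hv : v ∈ tcone T b) : 0 ≤ φ v := by
  obtain ⟨xs, lam, hmem, hlam, -, hd⟩ := hv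
  have h2 : Tendsto (fun k => φ (lam k • (xs k - b))) atTop (𝓝 (φ v)) :=
    (φ.continuous.tendsto v).comp hd
  refine ge_of_tendsto' h2 fun k => ?_
  have : φ (lam k • (xs k - b)) = lam k * φ (xs k) := by simp [hb]
  rw [this]; exact mul_nonneg (hlam k) (hT _ (hmem k))

lemma tcone_eq {T : Set W} {b : W} (φ : W →L[ℝ] ℝ) (hT : ∀ p ∈ T, φ p = 0)
    (hb : φ b = 0) {v : W} (hv : v ∈ tcone T b) : φ v = 0 := by
  obtain ⟨xs, lam, hmem, hlam, -, hd⟩ := hv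
  have h2 : Tendsto (fun k => φ (lam k • (xs k - b))) atTop (𝓝 (φ v)) :=
    (φ.continuous.tendsto v).comp hd
  have he : (fun k => φ (lam k • (xs k - b))) = fun _ => (0:ℝ) := by
    funext k; simp [hb, hT _ (hmem k)]
  rw [he] at h2
  exact (tendsto_nhds_unique tendsto_const_nhds h2).symm

lemma sq_fderiv_zero {φ : V → ℝ} {x : V} (h : DifferentiableAt ℝ φ x) (h0 : φ x = 0) :
    HasFDerivAt (fun t => φ t ^ 2) (0 : V →L[ℝ] ℝ) x := by
  have h2 : HasFDerivAt (fun t => φ t * φ t)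
      (φ x • fderiv ℝ φ x + φ x • fderiv ℝ φ x) x := HasFDerivAt.mul (𝕜 := ℝ) h.hasFDerivAt h.hasFDerivAt
  simpa [pow_two, h0] using h2

end Helpers

section helpers2
open InnerProductSpace

lemma core_hasFDerivAt {l : ℕ} (y : EuclideanSpace ℝ (Fin l)) (c : Fin l → ℝ)
    (b : EuclideanSpace ℝ (Fin l)) :
    HasFDerivAt (fun s : EuclideanSpace ℝ (Fin l) => ∑ i, y i * (c i - s i))
      ((InnerProductSpace.toDual ℝ (EuclideanSpace ℝ (Fin l))) (-y) :
        EuclideanSpace ℝ (Fin l) →L[ℝ] ℝ) b := by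
  have h : ∀ i : Fin l, HasFDerivAt (fun s : EuclideanSpace ℝ (Fin l) => y i * (c i - s i))
      (y i • ((0 : EuclideanSpace ℝ (Fin l) →L[ℝ] ℝ) - EuclideanSpace.proj i)) b := by
    intro i
    exact HasFDerivAt.const_mul (𝕜 := ℝ)
      ((hasFDerivAt_const (c i) b).sub ((EuclideanSpace.proj i).hasFDerivAt)) (y i)
  have hs := HasFDerivAt.fun_sum (fun i (_ : i ∈ Finset.univ) => h i)
  refine hs.congr_fderiv ?_
  ext v
  simp [PiLp.inner_apply, mul_comm]

lemma quad_hasFDerivAt {l : ℕ} (c : Fin l → ℝ) (b : EuclideanSpace ℝ (Fin l))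
    (hc : ∀ i, c i - b i = 0) :
    HasFDerivAt (fun s : EuclideanSpace ℝ (Fin l) => ∑ i, (c i - s i)^2)
      (0 : EuclideanSpace ℝ (Fin l) →L[ℝ] ℝ) b := by
  have h : ∀ i : Fin l, HasFDerivAt (fun s : EuclideanSpace ℝ (Fin l) => (c i - s i)^2)
      (0 : EuclideanSpace ℝ (Fin l) →L[ℝ] ℝ) b := by
    intro i
    refine sq_fderiv_zero ?_ (hc i)
    exact (differentiableAt_const (c i)).sub (EuclideanSpace.proj (𝕜 := ℝ) i : EuclideanSpace ℝ (Fin l) →L[ℝ] ℝ).differentiableAt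
  simpa using HasFDerivAt.fun_sum (fun i (_ : i ∈ Finset.univ) => h i)

lemma slack_hasGradientAt {l : ℕ} (y : EuclideanSpace ℝ (Fin l)) (c : Fin l → ℝ)
    (b : EuclideanSpace ℝ (Fin l)) (hc : ∀ i, c i - b i = 0) (A B ρ K K' : ℝ) :
    HasGradientAt (fun s : EuclideanSpace ℝ (Fin l) =>
      A + (∑ i, y i * (c i - s i)) + B + ρ / 2 * (K + (∑ i, (c i - s i)^2) + K')) (-y) b := by
  rw [hasGradientAt_iff_hasFDerivAt]
  have h1 := core_hasFDerivAt y c b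
  have h2 := quad_hasFDerivAt c b hc
  have h3 := (((hasFDerivAt_const A b).fun_add h1).add_const B).fun_add
    ((((hasFDerivAt_const K b).fun_add h2).add_const K').const_mul (ρ / 2))
  simpa using h3

lemma slack_hasGradientAt' {l : ℕ} (y : EuclideanSpace ℝ (Fin l)) (c : Fin l → ℝ)
    (b : EuclideanSpace ℝ (Fin l)) (hc : ∀ i, c i - b i = 0) (A ρ K : ℝ) :
    HasGradientAt (fun s : EuclideanSpace ℝ (Fin l) =>
      A + (∑ i, y i * (c i - s i)) + ρ / 2 * (K + ∑ i, (c i - s i)^2)) (-y) b := by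
  rw [hasGradientAt_iff_hasFDerivAt]
  have h1 := core_hasFDerivAt y c b
  have h2 := quad_hasFDerivAt c b hc
  have h3 := ((hasFDerivAt_const A b).fun_add h1).fun_add
    (((hasFDerivAt_const K b).fun_add h2).const_mul (ρ / 2))
  simpa using h3

end helpers2

/-- a strong stationary point `(x*, s*, y*)` of (MPVCS) is an equilibrium
point of the branch gradient/anti-gradient flow for every signature `σ` with
`s* ∈ C^b(σ)`: the negative `(x,s)`-gradient of `L^ρ` lies in the polar of the tangent
cone `T(C × C^b(σ), (x*, s*))` and `∇_y L^ρ(x*, s*, y*) = c(x*, s*) = 0`. -/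
theorem strong_stationary_is_equilibrium {n m l : ℕ}
    (f : EuclideanSpace ℝ (Fin n) → ℝ)
    (g : EuclideanSpace ℝ (Fin n) → EuclideanSpace ℝ (Fin m))
    (G H : Fin l → EuclideanSpace ℝ (Fin n) → ℝ)
    (C : Set (EuclideanSpace ℝ (Fin n))) (ρ : ℝ)
    (hf : ContDiff ℝ 2 f) (hg : ContDiff ℝ 2 g)
    (hG : ∀ i, ContDiff ℝ 2 (G i)) (hH : ∀ i, ContDiff ℝ 2 (H i))
    (hCne : C.Nonempty) (hCcl : IsClosed C) (hCcv : Convex ℝ C) (hρ : 0 ≤ ρ)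
    (xstar : EuclideanSpace ℝ (Fin n)) (sH sG : EuclideanSpace ℝ (Fin l))
    (yg : EuclideanSpace ℝ (Fin m)) (yH yG : EuclideanSpace ℝ (Fin l))
    -- (x*, s*) is feasible for (MPVCS)
    (hxC : xstar ∈ C) (hgx : g xstar = 0)
    (hH0 : ∀ i, H i xstar - sH i = 0) (hG0 : ∀ i, G i xstar - sG i = 0)
    (hsH : ∀ i, 0 ≤ sH i) (hsGH : ∀ i, 0 ≤ sG i * sH i)
    -- strong stationarity in x
    (hstat : -(gradient (fun x => f x + (inner ℝ yg (g x) : ℝ)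
          + (∑ i, yH i * H i x) + ∑ i, yG i * G i x) xstar)
        ∈ polarCone (tcone C xstar))
    -- multiplier sign conditions
    (hyH_plus : ∀ i, 0 < H i xstar → yH i = 0)
    (hyH_00_0p : ∀ i, H i xstar = 0 → 0 ≤ G i xstar → yH i ≤ 0)
    (hyG_0 : ∀ i, H i xstar = 0 → yG i = 0)
    (hyG_pp : ∀ i, 0 < H i xstar → 0 < G i xstar → yG i = 0)
    (hyG_p0 : ∀ i, 0 < H i xstar → G i xstar = 0 → yG i ≤ 0) :
    ∀ σ : Fin l → Bool, (sH, sG) ∈ branchSet σ →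
      ((-(gradient (fun x => Lrho f g G H ρ yg yH yG x sH sG) xstar),
        -(gradient (fun s => Lrho f g G H ρ yg yH yG xstar s sG) sH),
        -(gradient (fun s => Lrho f g G H ρ yg yH yG xstar sH s) sG))
          ∈ {d | ∀ v ∈ tcone (C ×ˢ branchSet σ) (xstar, (sH, sG)), pInner d v ≤ 0}) ∧
      g xstar = 0 ∧ (∀ i, H i xstar - sH i = 0) ∧ (∀ i, G i xstar - sG i = 0) := by
  intro σ hσ
  have hH0' : ∀ i, H i xstar = sH i := fun i => sub_eq_zero.mp (hH0 i)
  have hG0' : ∀ i, G i xstar = sG i := fun i => sub_eq_zero.mp (hG0 i)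
  -- the three gradient computations
  have gradsH : gradient (fun s => Lrho f g G H ρ yg yH yG xstar s sG) sH = -yH := by
    have h := slack_hasGradientAt yH (fun i => H i xstar) sH hH0
      (f xstar + (inner ℝ yg (g xstar) : ℝ)) (∑ i, yG i * (G i xstar - sG i)) ρ
      (‖g xstar‖ ^ 2) (∑ i, (G i xstar - sG i) ^ 2)
    exact h.gradient
  have gradsG : gradient (fun s => Lrho f g G H ρ yg yH yG xstar sH s) sG = -yG := by
    have h := slack_hasGradientAt' yG (fun i => G i xstar) sG hG0
      (f xstar + (inner ℝ yg (g xstar) : ℝ) + ∑ i, yH i * (H i xstar - sH i)) ρ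
      (‖g xstar‖ ^ 2 + ∑ i, (H i xstar - sH i) ^ 2)
    exact h.gradient
  have hgd : DifferentiableAt ℝ g xstar := (hg.differentiable two_ne_zero).differentiableAt
  have hfd : DifferentiableAt ℝ f xstar := (hf.differentiable two_ne_zero).differentiableAt
  have hHd : ∀ i, DifferentiableAt ℝ (H i) xstar :=
    fun i => ((hH i).differentiable two_ne_zero).differentiableAt
  have hGd : ∀ i, DifferentiableAt ℝ (G i) xstar :=
    fun i => ((hG i).differentiable two_ne_zero).differentiableAt
  have hFdiff : DifferentiableAt ℝ (fun x => f x + (inner ℝ yg (g x) : ℝ)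
      + (∑ i, yH i * H i x) + ∑ i, yG i * G i x) xstar := by
    refine DifferentiableAt.add (DifferentiableAt.add (DifferentiableAt.add hfd ?_) ?_) ?_
    · exact (differentiableAt_const yg).inner ℝ hgd
    · exact DifferentiableAt.fun_sum (fun i _ => (hHd i).const_mul (yH i))
    · exact DifferentiableAt.fun_sum (fun i _ => (hGd i).const_mul (yG i))
  have hnorm : HasFDerivAt (fun x : EuclideanSpace ℝ (Fin n) => ‖g x‖ ^ 2)
      (0 : EuclideanSpace ℝ (Fin n) →L[ℝ] ℝ) xstar := by
    have e : (fun x : EuclideanSpace ℝ (Fin n) => ‖g x‖ ^ 2)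
        = fun x => ∑ i, (g x i) ^ 2 := by
      funext x
      rw [← real_inner_self_eq_norm_sq, PiLp.inner_apply]
      simp [pow_two]
    rw [e]
    have h : ∀ i, HasFDerivAt (fun x => g x i ^ 2)
        (0 : EuclideanSpace ℝ (Fin n) →L[ℝ] ℝ) xstar := by
      intro i
      refine sq_fderiv_zero ?_ (by rw [hgx]; rfl)
      exact ((EuclideanSpace.proj (𝕜 := ℝ) i :
        EuclideanSpace ℝ (Fin m) →L[ℝ] ℝ).differentiableAt).comp xstar hgd
    simpa using HasFDerivAt.fun_sum (fun i (_ : i ∈ Finset.univ) => h i)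
  have hqH : HasFDerivAt (fun x => ∑ i, (H i x - sH i) ^ 2)
      (0 : EuclideanSpace ℝ (Fin n) →L[ℝ] ℝ) xstar := by
    have h : ∀ i, HasFDerivAt (fun x => (H i x - sH i) ^ 2)
        (0 : EuclideanSpace ℝ (Fin n) →L[ℝ] ℝ) xstar :=
      fun i => sq_fderiv_zero ((hHd i).sub_const _) (hH0 i)
    simpa using HasFDerivAt.fun_sum (fun i (_ : i ∈ Finset.univ) => h i)
  have hqG : HasFDerivAt (fun x => ∑ i, (G i x - sG i) ^ 2)
      (0 : EuclideanSpace ℝ (Fin n) →L[ℝ] ℝ) xstar := by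
    have h : ∀ i, HasFDerivAt (fun x => (G i x - sG i) ^ 2)
        (0 : EuclideanSpace ℝ (Fin n) →L[ℝ] ℝ) xstar :=
      fun i => sq_fderiv_zero ((hGd i).sub_const _) (hG0 i)
    simpa using HasFDerivAt.fun_sum (fun i (_ : i ∈ Finset.univ) => h i)
  have gradx : gradient (fun x => Lrho f g G H ρ yg yH yG x sH sG) xstar
      = gradient (fun x => f x + (inner ℝ yg (g x) : ℝ)
          + (∑ i, yH i * H i x) + ∑ i, yG i * G i x) xstar := by
    have hfun : (fun x => Lrho f g G H ρ yg yH yG x sH sG)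
        = fun x => (f x + (inner ℝ yg (g x) : ℝ)
            + (∑ i, yH i * H i x) + ∑ i, yG i * G i x)
          + (((-(∑ i, yH i * sH i)) - ∑ i, yG i * sG i)
            + ρ / 2 * (‖g x‖ ^ 2 + (∑ i, (H i x - sH i) ^ 2)
              + ∑ i, (G i x - sG i) ^ 2)) := by
      funext x
      simp only [Lrho, mul_sub, Finset.sum_sub_distrib]
      ring
    rw [hfun]
    apply HasGradientAt.gradient
    rw [hasGradientAt_iff_hasFDerivAt]
    have hd : (InnerProductSpace.toDual ℝ _) (gradient (fun x => f x + (inner ℝ yg (g x) : ℝ)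
        + (∑ i, yH i * H i x) + ∑ i, yG i * G i x) xstar)
        = fderiv ℝ (fun x => f x + (inner ℝ yg (g x) : ℝ)
          + (∑ i, yH i * H i x) + ∑ i, yG i * G i x) xstar := by
      unfold gradient
      exact (InnerProductSpace.toDual ℝ _).apply_symm_apply _
    rw [hd]
    have hQ : HasFDerivAt (fun x => ‖g x‖ ^ 2 + (∑ i, (H i x - sH i) ^ 2)
        + ∑ i, (G i x - sG i) ^ 2) (0 : EuclideanSpace ℝ (Fin n) →L[ℝ] ℝ) xstar := by
      simpa using (hnorm.fun_add hqH).fun_add hqG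
    have h := hFdiff.hasFDerivAt.fun_add
      ((hasFDerivAt_const ((-(∑ i, yH i * sH i)) - ∑ i, yG i * sG i) xstar).fun_add
        (HasFDerivAt.const_mul (𝕜 := ℝ) hQ (ρ / 2)))
    simpa using h
  refine ⟨?_, hgx, hH0, hG0⟩
  intro v hv
  have hv1 : v.1 ∈ tcone C xstar := tcone_fst hv
  have hv2 : v.2 ∈ tcone (branchSet σ) (sH, sG) := tcone_snd hv
  have hHcoord : ∀ i, yH i * v.2.1 i ≤ 0 := by
    intro i
    by_cases hb : σ i = true
    · rcases eq_or_lt_of_le (hsH i) with h0 | hpos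
      · have hyHle : yH i ≤ 0 := hyH_00_0p i (by rw [hH0' i]; exact h0.symm)
          (by rw [hG0' i]; exact ((hσ i).1 hb).2)
        have hvge : 0 ≤ v.2.1 i := by
          have := tcone_le ((EuclideanSpace.proj i).comp
              (ContinuousLinearMap.fst ℝ (EuclideanSpace ℝ (Fin l)) (EuclideanSpace ℝ (Fin l))))
            (fun p hp => by simpa using ((hp i).1 hb).1) (by simpa using h0.symm) hv2
          simpa using this
        exact mul_nonpos_iff.mpr (Or.inr ⟨hyHle, hvge⟩)
      · have hz : yH i = 0 := hyH_plus i (by rw [hH0' i]; exact hpos)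
        simp [hz]
    · have hb' : σ i = false := by revert hb; cases σ i <;> simp
      have hveq : v.2.1 i = 0 := by
        have := tcone_eq ((EuclideanSpace.proj i).comp
            (ContinuousLinearMap.fst ℝ (EuclideanSpace ℝ (Fin l)) (EuclideanSpace ℝ (Fin l))))
          (fun p hp => by simpa using ((hp i).2 hb').1) (by simpa using ((hσ i).2 hb').1) hv2
        simpa using this
      simp [hveq]
  have hGcoord : ∀ i, yG i * v.2.2 i ≤ 0 := by
    intro i
    rcases eq_or_lt_of_le (hsH i) with h0 | hpos
    · have hz : yG i = 0 := hyG_0 i (by rw [hH0' i]; exact h0.symm)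
      simp [hz]
    · have hb : σ i = true := by
        by_contra hbt
        have hb' : σ i = false := by revert hbt; cases σ i <;> simp
        have hz : sH i = 0 := ((hσ i).2 hb').1
        rw [hz] at hpos
        exact lt_irrefl 0 hpos
      have hsGpos : 0 ≤ sG i := ((hσ i).1 hb).2
      rcases eq_or_lt_of_le hsGpos with g0 | gpos
      · have hyGle : yG i ≤ 0 := hyG_p0 i (by rw [hH0' i]; exact hpos)
          (by rw [hG0' i]; exact g0.symm)
        have hvge : 0 ≤ v.2.2 i := by
          have := tcone_le ((EuclideanSpace.proj i).comp
              (ContinuousLinearMap.snd ℝ (EuclideanSpace ℝ (Fin l)) (EuclideanSpace ℝ (Fin l))))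
            (fun p hp => by simpa using ((hp i).1 hb).2) (by simpa using g0.symm) hv2
          simpa using this
        exact mul_nonpos_iff.mpr (Or.inr ⟨hyGle, hvge⟩)
      · have hz : yG i = 0 := hyG_pp i (by rw [hH0' i]; exact hpos)
          (by rw [hG0' i]; exact gpos)
        simp [hz]
  have hx : (inner ℝ (-(gradient (fun x => f x + (inner ℝ yg (g x) : ℝ)
      + (∑ i, yH i * H i x) + ∑ i, yG i * G i x) xstar)) v.1 : ℝ) ≤ 0 := hstat v.1 hv1
  have h2 : (inner ℝ yH v.2.1 : ℝ) ≤ 0 := by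
    rw [PiLp.inner_apply]
    simpa [mul_comm] using Finset.sum_nonpos (fun i (_ : i ∈ Finset.univ) => hHcoord i)
  have h3 : (inner ℝ yG v.2.2 : ℝ) ≤ 0 := by
    rw [PiLp.inner_apply]
    simpa [mul_comm] using Finset.sum_nonpos (fun i (_ : i ∈ Finset.univ) => hGcoord i)
  simp only [pInner, gradx, gradsH, gradsG, neg_neg]
  linarith
end
end

section
/- Let σ ∈ {0,1}ˡ be a signature, x* ∈ C, s* ∈ C^b(σ), and y* = (y_g, y_H, y_G) ∈ ℝᵐ × ℝˡ × ℝˡ. Assume: (i) feasibility: g(x*) = 0, H_i(x*) = s*_{H,i} and G_i(x*) = s*_{G,i} for all i; (ii) branch stationarity: −∇_{(x,s)} L(x*, s*, y*) ∈ T(C × C^b(σ), (x*, s*))⁻; (iii) no switching condition is triggered, i.e., for every i with σ_i = 1 and s*_{H,i} = s*_{G,i} = 0 it is NOT the case that (y_{H,i} ≤ 0 and y_{G,i} < 0), and for every i with σ_i = 0 and s*_{G,i} = 0 it is NOT the case that (y_{G,i} > 0 or (y_{G,i} = 0 and y_{H,i} > 0)) (note that −∇_{s_H,i}L = y_{H,i}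 and −∇_{s_G,i}L = y_{G,i}). Then x* is a strong stationary point of (MPVC) with multipliers η_H := y_H and η_G := y_G: −∇ₓ[f + ⟨y_g, g⟩ + Σᵢ (η_H)_i H_i + Σᵢ (η_G)_i G_i](x*) ∈ T(C, x*)⁻, with (η_H)_i = 0 for i ∈ I₊(x*), (η_H)_i ≤ 0 for i ∈ I₀₀(x*) ∪ I₀₊(x*), (η_H)_i unrestricted for i ∈ I₀₋(x*), (η_G)_i = 0 for i ∈ I₀(x*) ∪ I₊₊(x*), and (η_G)_i ≤ 0 for i ∈ I₊₀(x*). -/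
noncomputable section

open Filter Topology

/-- The Lagrangian `L(x, s, y)` of (MPVCS) with multiplier `y = (y_g, y_H, y_G)`. -/
def Lag {n m l : ℕ} (f : EuclideanSpace ℝ (Fin n) → ℝ)
    (g : EuclideanSpace ℝ (Fin n) → EuclideanSpace ℝ (Fin m))
    (G H : Fin l → EuclideanSpace ℝ (Fin n) → ℝ)
    (yg : EuclideanSpace ℝ (Fin m)) (yH yG : EuclideanSpace ℝ (Fin l))
    (x : EuclideanSpace ℝ (Fin n)) (sH sG : EuclideanSpace ℝ (Fin l)) : ℝ :=
  f x + (inner ℝ yg (g x) : ℝ) + (∑ i, yH i * (H i x - sH i)) + ∑ i, yG i * (G i x - sG i)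

/- ## Auxiliary lemmas -/

lemma gradient_const_sub_inner {E : Type*} [NormedAddCommGroup E] [InnerProductSpace ℝ E]
    [CompleteSpace E] (c : ℝ) (a x : E) :
    gradient (fun s => c - (inner ℝ a s : ℝ)) x = -a := by
  have h : HasGradientAt (fun s => c - (inner ℝ a s : ℝ)) (-a) x := by
    rw [hasGradientAt_iff_hasFDerivAt]
    have h2 : (InnerProductSpace.toDual ℝ E) (-a) = (0 : E →L[ℝ] ℝ) - InnerProductSpace.toDual ℝ E a := by
      simp
    rw [h2]
    exact (hasFDerivAt_const c x).sub ((InnerProductSpace.toDual ℝ E a).hasFDerivAt.congr_fderiv rfl)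
  exact h.gradient

lemma gradient_add_const {E : Type*} [NormedAddCommGroup E] [InnerProductSpace ℝ E]
    [CompleteSpace E] (f : E → ℝ) (c : ℝ) (x : E) :
    gradient (fun y => f y + c) x = gradient f x := by
  unfold gradient
  rw [fderiv_add_const]

lemma tcone_prod_left {V W : Type*} [NormedAddCommGroup V] [NormedSpace ℝ V]
    [NormedAddCommGroup W] [NormedSpace ℝ W] {C : Set V} {S : Set W} {x : V} {s : W}
    (hs : s ∈ S) {v : V} (hv : v ∈ tcone C x) : (v, (0 : W)) ∈ tcone (C ×ˢ S) (x, s) := by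
  obtain ⟨xs, lam, hmem, hnn, hx, hlim⟩ := hv
  refine ⟨fun k => (xs k, s), lam, fun k => ⟨hmem k, hs⟩, hnn, hx.prodMk_nhds tendsto_const_nhds, ?_⟩
  have : (fun k => lam k • ((xs k, s) - (x, s))) = fun k => (lam k • (xs k - x), (0 : W)) := by
    funext k; simp [Prod.ext_iff]
  rw [this]
  exact hlim.prodMk_nhds tendsto_const_nhds

lemma tcone_prod_right {V W : Type*} [NormedAddCommGroup V] [NormedSpace ℝ V]
    [NormedAddCommGroup W] [NormedSpace ℝ W] {C : Set V} {S : Set W} {x : V} {s : W}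
    (hx : x ∈ C) {w : W} (hw : w ∈ tcone S s) : ((0 : V), w) ∈ tcone (C ×ˢ S) (x, s) := by
  obtain ⟨xs, lam, hmem, hnn, hs, hlim⟩ := hw
  refine ⟨fun k => (x, xs k), lam, fun k => ⟨hx, hmem k⟩, hnn, tendsto_const_nhds.prodMk_nhds hs, ?_⟩
  have : (fun k => lam k • ((x, xs k) - (x, s))) = fun k => ((0 : V), lam k • (xs k - s)) := by
    funext k; simp [Prod.ext_iff]
  rw [this]
  exact tendsto_const_nhds.prodMk_nhds hlim

lemma tcone_convex_dir {V : Type*} [NormedAddCommGroup V] [NormedSpace ℝ V]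
    {S : Set V} (hconv : Convex ℝ S) {s s' : V} (hs : s ∈ S) (hs' : s' ∈ S) :
    s' - s ∈ tcone S s := by
  refine ⟨fun k => s + ((k : ℝ) + 1)⁻¹ • (s' - s), fun k => (k : ℝ) + 1, fun k => ?_,
    fun k => by positivity, ?_, ?_⟩
  · have h1 : (0:ℝ) < (k : ℝ) + 1 := by positivity
    have ht0 : (0:ℝ) ≤ ((k : ℝ) + 1)⁻¹ := by positivity
    have ht1 : ((k : ℝ) + 1)⁻¹ ≤ 1 := by
      rw [inv_le_one_iff₀]; right; linarith
    have := hconv hs hs' (by linarith : (0:ℝ) ≤ 1 - ((k : ℝ) + 1)⁻¹) ht0 (by ring)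
    convert this using 1
    simp [smul_sub, sub_smul]
    abel
  · have h : Tendsto (fun k : ℕ => ((k : ℝ) + 1)⁻¹) atTop (𝓝 0) := by
      simpa [one_div] using tendsto_one_div_add_atTop_nhds_zero_nat (𝕜 := ℝ)
    have := (h.smul_const (s' - s)).const_add s
    simpa using this
  · have : (fun k : ℕ => ((k : ℝ) + 1) • ((s + ((k : ℝ) + 1)⁻¹ • (s' - s)) - s)) = fun _ => s' - s := by
      funext k
      have hk : ((k : ℝ) + 1) ≠ 0 := by positivity
      simp [smul_smul, mul_inv_cancel₀ hk]
    rw [this]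
    exact tendsto_const_nhds

lemma branchSet_convex {l : ℕ} (σ : Fin l → Bool) : Convex ℝ (branchSet σ) := by
  intro a ha b hb t u ht hu htu i
  obtain ⟨ha1, ha2⟩ := ha i
  obtain ⟨hb1, hb2⟩ := hb i
  constructor
  · intro hσ
    obtain ⟨h1, h2⟩ := ha1 hσ; obtain ⟨h3, h4⟩ := hb1 hσ
    constructor <;>
    · show (0:ℝ) ≤ t * _ + u * _
      positivity
  · intro hσ
    obtain ⟨h1, h2⟩ := ha2 hσ; obtain ⟨h3, h4⟩ := hb2 hσ
    constructor
    · show t * a.1 i + u * b.1 i = 0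
      rw [h1, h3]; ring
    · show t * a.2 i + u * b.2 i ≤ 0
      nlinarith

lemma branch_update_fst {l : ℕ} (σ : Fin l → Bool) {sH sG : EuclideanSpace ℝ (Fin l)}
    (h : (sH, sG) ∈ branchSet σ) (i : Fin l) (a : ℝ)
    (h1 : σ i = true → 0 ≤ a) (h2 : σ i = false → a = 0) :
    (WithLp.toLp 2 (Function.update sH i a), sG) ∈ branchSet σ := by
  intro j
  rcases eq_or_ne j i with rfl | hne
  · exact ⟨fun hσ => ⟨by simpa using h1 hσ, ((h j).1 hσ).2⟩,
      fun hσ => ⟨by simpa using h2 hσ, ((h j).2 hσ).2⟩⟩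
  · exact ⟨fun hσ => ⟨by simpa [Function.update_of_ne hne] using ((h j).1 hσ).1, ((h j).1 hσ).2⟩,
      fun hσ => ⟨by simpa [Function.update_of_ne hne] using ((h j).2 hσ).1, ((h j).2 hσ).2⟩⟩

lemma branch_update_snd {l : ℕ} (σ : Fin l → Bool) {sH sG : EuclideanSpace ℝ (Fin l)}
    (h : (sH, sG) ∈ branchSet σ) (i : Fin l) (a : ℝ)
    (h1 : σ i = true → 0 ≤ a) (h2 : σ i = false → a ≤ 0) :
    (sH, WithLp.toLp 2 (Function.update sG i a)) ∈ branchSet σ := by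
  intro j
  rcases eq_or_ne j i with rfl | hne
  · exact ⟨fun hσ => ⟨((h j).1 hσ).1, by simpa using h1 hσ⟩,
      fun hσ => ⟨((h j).2 hσ).1, by simpa using h2 hσ⟩⟩
  · exact ⟨fun hσ => ⟨((h j).1 hσ).1, by simpa [Function.update_of_ne hne] using ((h j).1 hσ).2⟩,
      fun hσ => ⟨((h j).2 hσ).1, by simpa [Function.update_of_ne hne] using ((h j).2 hσ).2⟩⟩

lemma inner_single {l : ℕ} (y d : EuclideanSpace ℝ (Fin l)) (i : Fin l)
    (h0 : ∀ j, j ≠ i → d j = 0) : (inner ℝ y d : ℝ) = y i * d i := by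
  rw [PiLp.inner_apply]
  rw [Finset.sum_eq_single i]
  · simp [mul_comm]
  · intro j _ hj
    simp [h0 j hj]
  · simp

lemma sum_mul_eq_inner {l : ℕ} (y s : EuclideanSpace ℝ (Fin l)) :
    ∑ i, y i * s i = (inner ℝ y s : ℝ) := by
  rw [PiLp.inner_apply]
  simp [mul_comm]

lemma inner_eq_single {l : ℕ} (y u s : EuclideanSpace ℝ (Fin l)) (i : Fin l) (a : ℝ)
    (hu : ∀ j, u j = Function.update s i a j) :
    (inner ℝ y (u - s) : ℝ) = y i * (a - s i) := by
  rw [inner_single y _ i]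
  · show y i * (u i - s i) = _
    rw [hu i, Function.update_self]
  · intro j hj
    show u j - s j = 0
    rw [hu j, Function.update_of_ne hj, sub_self]

lemma inner_sub_eq_zero {l : ℕ} (y u s : EuclideanSpace ℝ (Fin l)) (hu : u = s) :
    (inner ℝ y (u - s) : ℝ) = 0 := by
  subst hu; simp

/-- a feasible, branch-stationary point at which no switching condition
is triggered is a strong stationary point of (MPVC) with multipliers
`η_H := y_H`, `η_G := y_G`. -/
theorem branch_equilibrium_is_strong_stationary {n m l : ℕ}
    (f : EuclideanSpace ℝ (Fin n) → ℝ)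
    (g : EuclideanSpace ℝ (Fin n) → EuclideanSpace ℝ (Fin m))
    (G H : Fin l → EuclideanSpace ℝ (Fin n) → ℝ)
    (C : Set (EuclideanSpace ℝ (Fin n)))
    (hf : ContDiff ℝ 2 f) (hg : ContDiff ℝ 2 g)
    (hG : ∀ i, ContDiff ℝ 2 (G i)) (hH : ∀ i, ContDiff ℝ 2 (H i))
    (hCne : C.Nonempty) (hCcl : IsClosed C) (hCcv : Convex ℝ C)
    (σ : Fin l → Bool)
    (xstar : EuclideanSpace ℝ (Fin n)) (sH sG : EuclideanSpace ℝ (Fin l))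
    (yg : EuclideanSpace ℝ (Fin m)) (yH yG : EuclideanSpace ℝ (Fin l))
    (hxC : xstar ∈ C) (hsb : (sH, sG) ∈ branchSet σ)
    -- (i) feasibility
    (hgx : g xstar = 0) (hH0 : ∀ i, H i xstar = sH i) (hG0 : ∀ i, G i xstar = sG i)
    -- (ii) branch stationarity: −∇_{(x,s)}L ∈ T(C × C^b(σ), (x*, s*))⁻
    (hstat : ∀ v ∈ tcone (C ×ˢ branchSet σ) (xstar, (sH, sG)),
      pInner (-(gradient (fun x => Lag f g G H yg yH yG x sH sG) xstar),
              -(gradient (fun s => Lag f g G H yg yH yG xstar s sG) sH),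
              -(gradient (fun s => Lag f g G H yg yH yG xstar sH s) sG)) v ≤ 0)
    -- (iii) no switching condition is triggered
    (hns_upper : ∀ i, σ i = true → sH i = 0 → sG i = 0 → ¬(yH i ≤ 0 ∧ yG i < 0))
    (hns_lower : ∀ i, σ i = false → sG i = 0 →
      ¬(0 < yG i ∨ (yG i = 0 ∧ 0 < yH i))) :
    -- conclusion: strong stationarity of (MPVC) with η_H = y_H, η_G = y_G
    (-(gradient (fun x => f x + (inner ℝ yg (g x) : ℝ)
          + (∑ i, yH i * H i x) + ∑ i, yG i * G i x) xstar)
        ∈ polarCone (tcone C xstar)) ∧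
    (∀ i, 0 < H i xstar → yH i = 0) ∧
    (∀ i, H i xstar = 0 → 0 ≤ G i xstar → yH i ≤ 0) ∧
    (∀ i, H i xstar = 0 → yG i = 0) ∧
    (∀ i, 0 < H i xstar → 0 < G i xstar → yG i = 0) ∧
    (∀ i, 0 < H i xstar → G i xstar = 0 → yG i ≤ 0) := by
  -- gradient computations
  have hgradH : gradient (fun s => Lag f g G H yg yH yG xstar s sG) sH = -yH := by
    have hfun : (fun s => Lag f g G H yg yH yG xstar s sG) =
        fun s : EuclideanSpace ℝ (Fin l) =>
          (f xstar + (inner ℝ yg (g xstar) : ℝ) + (∑ i, yH i * H i xstar)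
            + ∑ i, yG i * (G i xstar - sG i)) - (inner ℝ yH s : ℝ) := by
      funext s
      simp only [Lag, mul_sub, Finset.sum_sub_distrib, ← sum_mul_eq_inner]
      ring
    rw [hfun, gradient_const_sub_inner]
  have hgradG : gradient (fun s => Lag f g G H yg yH yG xstar sH s) sG = -yG := by
    have hfun : (fun s => Lag f g G H yg yH yG xstar sH s) =
        fun s : EuclideanSpace ℝ (Fin l) =>
          (f xstar + (inner ℝ yg (g xstar) : ℝ) + (∑ i, yH i * (H i xstar - sH i))
            + ∑ i, yG i * G i xstar) - (inner ℝ yG s : ℝ) := by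
      funext s
      simp only [Lag, mul_sub, Finset.sum_sub_distrib, ← sum_mul_eq_inner]
      ring
    rw [hfun, gradient_const_sub_inner]
  have hgradx : gradient (fun x => Lag f g G H yg yH yG x sH sG) xstar =
      gradient (fun x => f x + (inner ℝ yg (g x) : ℝ)
          + (∑ i, yH i * H i x) + ∑ i, yG i * G i x) xstar := by
    have hfun : (fun x => Lag f g G H yg yH yG x sH sG) =
        fun x => (f x + (inner ℝ yg (g x) : ℝ)
          + (∑ i, yH i * H i x) + ∑ i, yG i * G i x)
          + (-(∑ i, yH i * sH i) - ∑ i, yG i * sG i) := by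
      funext x
      simp only [Lag, mul_sub, Finset.sum_sub_distrib]
      ring
    rw [hfun, gradient_add_const]
  rw [hgradH, hgradG, hgradx] at hstat
  simp only [neg_neg] at hstat
  -- key inequality for s-directions
  have key : ∀ dH dG : EuclideanSpace ℝ (Fin l),
      (dH, dG) ∈ tcone (branchSet σ) (sH, sG) →
      (inner ℝ yH dH : ℝ) + (inner ℝ yG dG : ℝ) ≤ 0 := by
    intro dH dG hm
    have := hstat (0, dH, dG) (tcone_prod_right hxC hm)
    simp only [pInner, inner_zero_right] at this
    linarith
  have hdir : ∀ s' ∈ branchSet σ,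
      (inner ℝ yH (s'.1 - sH) : ℝ) + (inner ℝ yG (s'.2 - sG) : ℝ) ≤ 0 := by
    intro s' hs'
    exact key _ _ (tcone_convex_dir (branchSet_convex σ) hsb hs')
  -- coordinate inequalities
  have hHdir : ∀ i a, (σ i = true → 0 ≤ a) → (σ i = false → a = 0) →
      yH i * (a - sH i) ≤ 0 := by
    intro i a h1 h2
    have hthis := hdir _ (branch_update_fst σ hsb i a h1 h2)
    rw [inner_eq_single yH _ sH i a (fun j => rfl)] at hthis
    rw [inner_sub_eq_zero yG _ sG rfl] at hthis
    linarith
  have hGdir : ∀ i a, (σ i = true → 0 ≤ a) → (σ i = false → a ≤ 0) →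
      yG i * (a - sG i) ≤ 0 := by
    intro i a h1 h2
    have hthis := hdir _ (branch_update_snd σ hsb i a h1 h2)
    rw [inner_eq_single yG _ sG i a (fun j => rfl)] at hthis
    rw [inner_sub_eq_zero yH _ sH rfl] at hthis
    linarith
  -- σ must be true where sH i > 0
  have hσtrue : ∀ i, 0 < sH i → σ i = true := by
    intro i hi
    cases hσ : σ i with
    | false => exact absurd ((hsb i).2 hσ).1 (by linarith)
    | true => rfl
  refine ⟨?_, ?_, ?_, ?_, ?_, ?_⟩
  · -- strong stationarity on x
    intro v hv
    have := hstat (v, 0, 0) (tcone_prod_left hsb hv)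
    simp only [pInner, inner_zero_right] at this
    linarith
  · -- 0 < H i → yH i = 0
    intro i hi
    rw [hH0 i] at hi
    have hσ := hσtrue i hi
    have h1 := hHdir i (sH i + 1) (fun _ => by linarith) (fun h => by simp [h] at hσ)
    have h2 := hHdir i (sH i / 2) (fun _ => by linarith) (fun h => by simp [h] at hσ)
    nlinarith
  · -- H i = 0, 0 ≤ G i → yH i ≤ 0
    intro i hHi hGi
    rw [hH0 i] at hHi
    rw [hG0 i] at hGi
    cases hσ : σ i with
    | true =>
      have h1 := hHdir i 1 (fun _ => by norm_num) (fun h => by simp [h] at hσ)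
      rw [hHi] at h1
      linarith
    | false =>
      have hG0' : sG i = 0 := le_antisymm ((hsb i).2 hσ).2 hGi
      have h1 := hGdir i (-1) (fun h => by simp [h] at hσ) (fun _ => by norm_num)
      rw [hG0'] at h1
      have hyG : 0 ≤ yG i := by linarith
      have := hns_lower i hσ hG0'
      push_neg at this
      obtain ⟨hA, hB⟩ := this
      have hyG0 : yG i = 0 := le_antisymm hA hyG
      exact hB hyG0
  · -- H i = 0 → yG i = 0
    intro i hHi
    rw [hH0 i] at hHi
    cases hσ : σ i with
    | true =>
      have hsGnn : 0 ≤ sG i := ((hsb i).1 hσ).2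
      have hfalse : σ i = false → False := fun h => by simp [h] at hσ
      rcases eq_or_lt_of_le hsGnn with heq | hlt
      · -- sG i = 0
        have h1 := hGdir i 1 (fun _ => by norm_num) (fun h => (hfalse h).elim)
        rw [← heq] at h1
        have hyGle : yG i ≤ 0 := by linarith
        have h2 := hHdir i 1 (fun _ => by norm_num) (fun h => (hfalse h).elim)
        rw [hHi] at h2
        have hyHle : yH i ≤ 0 := by linarith
        have := hns_upper i hσ hHi heq.symm
        rcases lt_or_ge (yG i) 0 with hlt' | hge
        · exact absurd ⟨hyHle, hlt'⟩ this
        · exact le_antisymm hyGle hge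
      · -- 0 < sG i
        have h1 := hGdir i (sG i + 1) (fun _ => by linarith) (fun h => (hfalse h).elim)
        have h2 := hGdir i (sG i / 2) (fun _ => by linarith) (fun h => (hfalse h).elim)
        nlinarith
    | false =>
      have hsGnp : sG i ≤ 0 := ((hsb i).2 hσ).2
      have htrue : σ i = true → (0:ℝ) ≤ 0 := fun _ => le_refl 0
      rcases eq_or_lt_of_le hsGnp with heq | hlt
      · -- sG i = 0
        have h1 := hGdir i (-1) (fun h => by simp [h] at hσ) (fun _ => by norm_num)
        rw [heq] at h1
        have hyG : 0 ≤ yG i := by linarith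
        have := hns_lower i hσ heq
        push_neg at this
        exact le_antisymm this.1 hyG
      · -- sG i < 0
        have h1 := hGdir i 0 (fun h => by simp [h] at hσ) (fun _ => le_refl 0)
        have h2 := hGdir i (2 * sG i) (fun h => by simp [h] at hσ) (fun _ => by linarith)
        nlinarith
  · -- 0 < H, 0 < G → yG i = 0
    intro i hHi hGi
    rw [hH0 i] at hHi
    rw [hG0 i] at hGi
    have hσ := hσtrue i hHi
    have hfalse : σ i = false → False := fun h => by simp [h] at hσ
    have h1 := hGdir i (sG i + 1) (fun _ => by linarith) (fun h => (hfalse h).elim)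
    have h2 := hGdir i (sG i / 2) (fun _ => by linarith) (fun h => (hfalse h).elim)
    nlinarith
  · -- 0 < H, G = 0 → yG i ≤ 0
    intro i hHi hGi
    rw [hH0 i] at hHi
    rw [hG0 i] at hGi
    have hσ := hσtrue i hHi
    have hfalse : σ i = false → False := fun h => by simp [h] at hσ
    have h1 := hGdir i 1 (fun _ => by norm_num) (fun h => (hfalse h).elim)
    rw [hGi] at h1
    linarith
end
end

section
/- Let 𝟙 ∈ ℝᴺ denote the all-ones vector and suppose K(𝟙) is invertible. Let f ∈ ℝ^d, c > 0, σ̄ > 0, ā > 0, and let α > 0 satisfy α ≤ ā, α·c ≥ fᵀK(𝟙)⁻¹f, and α·ℓ_i·σ̄ ≥ |E·γ_iᵀK(𝟙)⁻¹f| for all i = 1,…,N. Then the point a := α·𝟙, u := α⁻¹K(𝟙)⁻¹f is feasible for the truss design constraints: K(a)u = f, fᵀu ≤ c, 0 ≤ a_i ≤ ā for all i, and (σ̄² − σ_i(u)²)·a_i ≥ 0 for all i, where σ_i(u) = E·γ_iᵀu/ℓ_i. -/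
open scoped Matrix

/-- feasibility of the initialization `a = α·𝟙`, `u = α⁻¹K(𝟙)⁻¹f` for the
truss design constraints, provided `α ≤ ā`, `α·c ≥ fᵀK(𝟙)⁻¹f`, and
`α·ℓᵢ·σ̄ ≥ |E·γᵢᵀK(𝟙)⁻¹f|` for all `i`. -/
theorem truss_initialization_feasible {N d : ℕ} (E : ℝ) (hE : 0 < E)
    (ℓ : Fin N → ℝ) (hℓ : ∀ i, 0 < ℓ i) (γ : Fin N → Fin d → ℝ)
    (K : (Fin N → ℝ) → Matrix (Fin d) (Fin d) ℝ)
    (hK : ∀ a, K a = ∑ i, a i • ((E / ℓ i) • Matrix.vecMulVec (γ i) (γ i)))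
    -- K(𝟙) is invertible with inverse Kinv (𝟙 = all-ones vector)
    (Kinv : Matrix (Fin d) (Fin d) ℝ)
    (hKinv1 : K (fun _ => 1) * Kinv = 1) (hKinv2 : Kinv * K (fun _ => 1) = 1)
    (f : Fin d → ℝ) (c σbar abar α : ℝ)
    (hc : 0 < c) (hσ : 0 < σbar) (habar : 0 < abar) (hα : 0 < α)
    (hαa : α ≤ abar)
    (hαc : f ⬝ᵥ Kinv.mulVec f ≤ α * c)
    (hαs : ∀ i, |E * (γ i ⬝ᵥ Kinv.mulVec f)| ≤ α * ℓ i * σbar)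
    (a : Fin N → ℝ) (ha : a = fun _ => α)
    (u : Fin d → ℝ) (hu : u = α⁻¹ • Kinv.mulVec f) :
    (K a).mulVec u = f ∧
    f ⬝ᵥ u ≤ c ∧
    (∀ i, 0 ≤ a i ∧ a i ≤ abar) ∧
    ∀ i, 0 ≤ (σbar ^ 2 - (E * (γ i ⬝ᵥ u) / ℓ i) ^ 2) * a i := by

  have hKa : K a = α • K (fun _ => 1) := by
    rw [hK, hK, ha, Finset.smul_sum]
    refine Finset.sum_congr rfl fun i _ => ?_
    simp [smul_smul]
  have hmv : (K (fun _ => 1)).mulVec (Kinv.mulVec f) = f := by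
    rw [Matrix.mulVec_mulVec, hKinv1, Matrix.one_mulVec]
  refine ⟨?_, ?_, ?_, ?_⟩
  · rw [hKa, hu, Matrix.smul_mulVec, Matrix.mulVec_smul, hmv,
      smul_smul, mul_inv_cancel₀ hα.ne', one_smul]
  · rw [hu]
    have heq : f ⬝ᵥ α⁻¹ • Kinv.mulVec f = α⁻¹ * (f ⬝ᵥ Kinv.mulVec f) := by
      simp [dotProduct_smul]
    rw [heq, inv_mul_le_iff₀ hα]
    linarith
  · intro i; rw [ha]; exact ⟨hα.le, hαa⟩
  · intro i
    have h1 : |E * (γ i ⬝ᵥ u)| ≤ ℓ i * σbar := by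
      rw [hu]
      have : γ i ⬝ᵥ (α⁻¹ • Kinv.mulVec f) = α⁻¹ * (γ i ⬝ᵥ Kinv.mulVec f) := by
        simp [dotProduct_smul]
      rw [this, ← mul_assoc, mul_comm E α⁻¹, mul_assoc, abs_mul, abs_inv,
        abs_of_pos hα]
      rw [inv_mul_le_iff₀ hα]
      calc |E * (γ i ⬝ᵥ Kinv.mulVec f)| ≤ α * ℓ i * σbar := hαs i
        _ = α * (ℓ i * σbar) := by ring
    have h2 : |E * (γ i ⬝ᵥ u) / ℓ i| ≤ σbar := by
      rw [abs_div, abs_of_pos (hℓ i), div_le_iff₀ (hℓ i)]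
      linarith [h1]
    have h3 : (E * (γ i ⬝ᵥ u) / ℓ i) ^ 2 ≤ σbar ^ 2 := by
      rw [← sq_abs]
      exact pow_le_pow_left₀ (abs_nonneg _) h2 2
    rw [ha]
    exact mul_nonneg (by linarith) hα.le
end
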